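/- Let π be the density of a weakly structurally Markov graph law with full support on decomposable graphs on V, and let S ⊆ V with |S| ≤ |V| − 2. Then the ratio π(G⟨R_1,R_2⟩) / (π(G⟨R_1⟩) π(G⟨R_2⟩)) takes the same value for all pairs R_1, R_2 ⊆ V with R_1 ∩ R_2 = S, R_1 ⊋ S, and R_2 ⊋ S. -/

import Mathlib

open scoped Classical BigOperators

/-- A graph is decomposable (chordal) if it has no induced cycle of length at least 4. -/
def Chordal {V : Type*} (G : SimpleGraph V) : Prop :=
  ¬ ∃ (n : ℕ) (f : ZMod n ↪ V), 4 ≤ n ∧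
      ∀ i j : ZMod n, G.Adj (f i) (f j) ↔ (i = j + 1 ∨ j = i + 1)

/-- `C` is a maximal clique (a "clique" in the terminology of the paper) of `G`. -/
def MaxClique {V : Type*} (G : SimpleGraph V) (C : Set V) : Prop :=
  G.IsClique C ∧ ∀ D, G.IsClique D → C ⊆ D → C = D

/-- `C` is a maximal complete subset of the subgraph of `G` induced on `A`,
i.e. a clique of `G_A`. -/
def MaxCliqueIn {V : Type*} (G : SimpleGraph V) (A C : Set V) : Prop :=
  C ⊆ A ∧ G.IsClique C ∧ ∀ D, D ⊆ A → G.IsClique D → C ⊆ D → C = D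

/-- `(A,B)` is a decomposition of `G`: it covers the vertex set, `A ∩ B` is complete
and `A ∩ B` separates `A \ B` from `B \ A`. -/
def IsDecomposition {V : Type*} (G : SimpleGraph V) (A B : Set V) : Prop :=
  A ∪ B = Set.univ ∧ G.IsClique (A ∩ B) ∧
    ∀ u ∈ A \ B, ∀ v ∈ B \ A, ∀ p : G.Walk u v, ∃ w ∈ A ∩ B, w ∈ p.support

/-- The graph `G⟨A₁,…,A_k⟩` on `V` that is complete on each member of `𝒜` and
has no other edges. -/
def coverGraph {V : Type*} (𝒜 : Set (Set V)) : SimpleGraph V where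
  Adj u v := u ≠ v ∧ ∃ A ∈ 𝒜, u ∈ A ∧ v ∈ A
  symm := by
    constructor
    rintro u v ⟨huv, A, hA, hu, hv⟩
    exact ⟨huv.symm, A, hA, hv, hu⟩
  loopless := by constructor; rintro v ⟨hv, -⟩; exact hv rfl

/-- Total mass that the density `π` puts on a set of graphs. -/
noncomputable def mass {V : Type*} (π : SimpleGraph V → ℝ) (S : Set (SimpleGraph V)) : ℝ :=
  ∑ᶠ G ∈ S, π G

/-- `𝔘*(A,B)`: decomposable graphs for which `(A,B)` is a decomposition and
`A ∩ B` is a clique (maximal complete subgraph) of `G_A`. -/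
def Ustar {V : Type*} (A B : Set V) : Set (SimpleGraph V) :=
  {G | Chordal G ∧ IsDecomposition G A B ∧ MaxCliqueIn G A (A ∩ B)}

/-- The weak structural Markov property: for every covering pair `(A,B)`,
the induced subgraphs `G_A` and `G_B` are independent conditionally on
`G ∈ 𝔘*(A,B)`. -/
def WeaklyStructurallyMarkov {V : Type*} (π : SimpleGraph V → ℝ) : Prop :=
  ∀ A B : Set V, A ∪ B = Set.univ →
    ∀ H₁ ∈ Ustar A B, ∀ H₂ ∈ Ustar A B,
      mass π {G ∈ Ustar A B |
            G.induce A = H₁.induce A ∧ G.induce B = H₂.induce B} *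
          mass π (Ustar A B) =
        mass π {G ∈ Ustar A B | G.induce A = H₁.induce A} *
          mass π {G ∈ Ustar A B | G.induce B = H₂.induce B}

/-- `π` is the density of a graph law on the set of decomposable graphs on `V`. -/
def IsGraphLaw {V : Type*} [Fintype V] (π : SimpleGraph V → ℝ) : Prop :=
  (∀ G, 0 ≤ π G) ∧ (∀ G, ¬ Chordal G → π G = 0) ∧ ∑ᶠ G : SimpleGraph V, π G = 1

/-- `π` has full support on the decomposable graphs. -/
def FullSupport {V : Type*} (π : SimpleGraph V → ℝ) : Prop :=
  ∀ G, Chordal G → 0 < π G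

/-- A junction tree for `G`: a tree on the maximal cliques of `G` such that the
cliques containing any fixed vertex form a connected subtree. -/
structure JunctionTree {V : Type*} (G : SimpleGraph V) where
  J : ℕ
  clique : Fin J → Set V
  clique_inj : Function.Injective clique
  clique_max : ∀ i, MaxClique G (clique i)
  clique_surj : ∀ C, MaxClique G C → ∃ i, clique i = C
  T : SimpleGraph (Fin J)
  isTree : T.IsTree
  junction : ∀ v : V, ((T.induce {i | v ∈ clique i}).Connected)

/-- The separator associated with an (unordered) edge of a junction tree. -/
def JunctionTree.sep {V : Type*} {G : SimpleGraph V} (JT : JunctionTree G) :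
    Sym2 (Fin JT.J) → Set V :=
  Sym2.lift ⟨fun i j => JT.clique i ∩ JT.clique j, fun i j => Set.inter_comm _ _⟩

/-- `π` is a clique–separator factorisation law: its density is proportional to
`∏_C φ_C / ∏_S ψ_S` over the cliques and separators of `G`. -/
def IsCSFLaw {V : Type*} (π : SimpleGraph V → ℝ) : Prop :=
  ∃ (φ ψ : Set V → ℝ) (c : ℝ), (∀ A, 0 < φ A) ∧ (∀ A, 0 < ψ A) ∧ 0 < c ∧
    ∀ G : SimpleGraph V, Chordal G → ∀ JT : JunctionTree G,
      π G = c * (∏ i : Fin JT.J, φ (JT.clique i)) /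
        ∏ᶠ e ∈ JT.T.edgeSet, ψ (JT.sep e)

/-- The union of the cliques visited before step `j`. -/
def priorUnion {V : Type*} {J : ℕ} (f : Fin J → Set V) (j : Fin J) : Set V :=
  ⋃ i ∈ {i : Fin J | i < j}, f i

/-- `f` is a pluperfect ordering of the (maximal) cliques of `G`: at each step the
clique chosen is available and its separator is not a proper subset of the
separator of any other available clique. -/
def PluperfectOrdering {V : Type*} (G : SimpleGraph V) {J : ℕ} (f : Fin J → Set V) : Prop :=
  Function.Injective f ∧ (∀ i, MaxClique G (f i)) ∧ (∀ C, MaxClique G C → ∃ i, f i = C) ∧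
  ∀ j : Fin J, (j : ℕ) ≠ 0 →
    (∃ i < j, f j ∩ priorUnion f j ⊆ f i) ∧
    ∀ k : Fin J, j ≤ k → (∃ i < j, f k ∩ priorUnion f j ⊆ f i) →
      ¬ f j ∩ priorUnion f j ⊂ f k ∩ priorUnion f j


/-! ### Auxiliary lemmas -/

section Aux

variable {V : Type*}

lemma chordal_pair {V : Type*} (P Q : Set V) : Chordal (coverGraph {P, Q}) := by
  rintro ⟨n, f, hn, hadj⟩
  haveI : NeZero n := ⟨by omega⟩
  have hcast : ∀ a b : ℕ, a < n → b < n → ((a : ZMod n) = (b : ZMod n)) → a = b := by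
    intro a b ha hb h
    have := congrArg ZMod.val h
    rwa [ZMod.val_cast_of_lt ha, ZMod.val_cast_of_lt hb] at this
  have h30 : (3 : ZMod n) ≠ 0 := by
    intro h
    have : ((3:ℕ) : ZMod n) = ((0:ℕ) : ZMod n) := by push_cast; exact h
    simpa using hcast 3 0 (by omega) (by omega) this
  have h21 : (2 : ZMod n) ≠ 1 := by
    intro h
    have : ((2:ℕ) : ZMod n) = ((1:ℕ) : ZMod n) := by push_cast; exact h
    simpa using hcast 2 1 (by omega) (by omega) this
  have h32 : (3 : ZMod n) ≠ 2 := by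
    intro h
    have : ((3:ℕ) : ZMod n) = ((2:ℕ) : ZMod n) := by push_cast; exact h
    simpa using hcast 3 2 (by omega) (by omega) this
  have h02 : (0 : ZMod n) ≠ 2 := by
    intro h
    have : ((0:ℕ) : ZMod n) = ((2:ℕ) : ZMod n) := by push_cast; exact h
    simpa using hcast 0 2 (by omega) (by omega) this
  have h13 : (1 : ZMod n) ≠ 3 := by
    intro h
    have : ((1:ℕ) : ZMod n) = ((3:ℕ) : ZMod n) := by push_cast; exact h
    simpa using hcast 1 3 (by omega) (by omega) this
  -- edges
  have e01 : (coverGraph {P, Q}).Adj (f 0) (f 1) := (hadj 0 1).mpr (Or.inr (zero_add 1).symm)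
  have e12 : (coverGraph {P, Q}).Adj (f 1) (f 2) := (hadj 1 2).mpr (Or.inr one_add_one_eq_two.symm)
  have e23 : (coverGraph {P, Q}).Adj (f 2) (f 3) := (hadj 2 3).mpr (Or.inr two_add_one_eq_three.symm)
  -- non-edges
  have n02 : ¬ (coverGraph {P, Q}).Adj (f 0) (f 2) := by
    intro h
    rcases (hadj 0 2).mp h with h' | h'
    · rw [two_add_one_eq_three] at h'; exact h30 h'.symm
    · rw [zero_add] at h'; exact h21 h'
  have n13 : ¬ (coverGraph {P, Q}).Adj (f 1) (f 3) := by
    intro h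
    rcases (hadj 1 3).mp h with h' | h'
    · have : (0 : ZMod n) + 1 = 3 + 1 := by rw [zero_add]; exact h'
      exact h30 (add_right_cancel this).symm
    · rw [one_add_one_eq_two] at h'; exact h32 h'
  obtain ⟨ne01, C₀, hC₀, hv00, hv01⟩ := e01
  obtain ⟨ne12, C₁, hC₁, hv11, hv12⟩ := e12
  obtain ⟨ne23, C₂, hC₂, hv22, hv23⟩ := e23
  have hf02 : f 0 ≠ f 2 := fun h => h02 (f.injective h)
  have hf13 : f 1 ≠ f 3 := fun h => h13 (f.injective h)
  have hv0C₁ : f 0 ∉ C₁ := fun h => n02 ⟨hf02, C₁, hC₁, h, hv12⟩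
  have hv3C₁ : f 3 ∉ C₁ := fun h => n13 ⟨hf13, C₁, hC₁, hv11, h⟩
  have hne01 : C₀ ≠ C₁ := fun h => hv0C₁ (h ▸ hv00)
  have hne21 : C₂ ≠ C₁ := fun h => hv3C₁ (h ▸ hv23)
  have hC₀' := hC₀
  simp only [Set.mem_insert_iff, Set.mem_singleton_iff] at hC₀ hC₁ hC₂
  have hC02 : C₀ = C₂ := by
    rcases hC₀ with h0 | h0 <;> rcases hC₁ with h1 | h1 <;> rcases hC₂ with h2 | h2 <;>
      first
        | exact h0.trans h2.symm
        | exact absurd (h0.trans h1.symm) hne01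
        | exact absurd (h2.trans h1.symm) hne21
  exact n02 ⟨hf02, C₀, hC₀', hv00, hC02 ▸ hv22⟩

lemma chordal_single (P : Set V) : Chordal (coverGraph {P}) := by
  rw [← Set.pair_eq_singleton P]
  exact chordal_pair P P

lemma cover_clique {𝒜 : Set (Set V)} {D C : Set V} (hD : D ∈ 𝒜) (hCD : C ⊆ D) :
    (coverGraph 𝒜).IsClique C := by
  intro u hu v hv huv
  exact ⟨huv, D, hD, hCD hu, hCD hv⟩

lemma walk_hits {G : SimpleGraph V} {A B : Set V}
    (hcross : ∀ ⦃u v⦄, G.Adj u v → u ∈ A → v ∉ A → u ∈ A ∩ B) :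
    ∀ {u v : V} (p : G.Walk u v), u ∈ A → v ∉ A → ∃ w ∈ A ∩ B, w ∈ p.support := by
  intro u v p
  induction p with
  | nil => intro hu hv; exact absurd hu hv
  | @cons u x v hadj q ih =>
    intro hu hv
    by_cases hx : x ∈ A
    · obtain ⟨w, hw, hws⟩ := ih hx hv
      exact ⟨w, hw, by rw [SimpleGraph.Walk.support_cons]; exact List.mem_cons_of_mem _ hws⟩
    · exact ⟨u, hcross hadj hu hx, SimpleGraph.Walk.start_mem_support _⟩

lemma cover_decomp {𝒜 : Set (Set V)} {A B : Set V} (hAB : A ∪ B = Set.univ)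
    (hclique : (coverGraph 𝒜).IsClique (A ∩ B))
    (hsplit : ∀ C ∈ 𝒜, C ⊆ A ∨ C ⊆ B) :
    IsDecomposition (coverGraph 𝒜) A B := by
  refine ⟨hAB, hclique, fun u hu v hv p => ?_⟩
  refine walk_hits ?_ p hu.1 hv.2
  rintro x y ⟨hxy, C, hC, hx, hy⟩ hxA hyA
  rcases hsplit C hC with h | h
  · exact absurd (h hy) hyA
  · exact ⟨hxA, h hx⟩

lemma cover_max {𝒜 : Set (Set V)} {A T : Set V} {b : V}
    (hTA : T ⊆ A) (hcl : (coverGraph 𝒜).IsClique T) (hbT : b ∈ T)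
    (h : ∀ C ∈ 𝒜, b ∈ C → ∀ x ∈ C, x ∈ A → x ∈ T) :
    MaxCliqueIn (coverGraph 𝒜) A T := by
  refine ⟨hTA, hcl, fun D hDA hDcl hTD => ?_⟩
  refine Set.Subset.antisymm hTD fun x hx => ?_
  by_cases hxb : x = b
  · exact hxb ▸ hbT
  · obtain ⟨-, C, hC, hxC, hbC⟩ := hDcl hx (hTD hbT) hxb
    exact h C hC hbC x hxC (hDA hx)

lemma decomp_no_adj {G : SimpleGraph V} {A B : Set V} (hdec : IsDecomposition G A B)
    {u v : V} (hu : u ∈ A \ B) (hv : v ∈ B \ A) : ¬ G.Adj u v := by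
  intro h
  obtain ⟨w, hw, hws⟩ := hdec.2.2 u hu v hv (SimpleGraph.Walk.cons h SimpleGraph.Walk.nil)
  have hwuv : w = u ∨ w = v := by simpa using hws
  rcases hwuv with rfl | rfl
  · exact hu.2 hw.2
  · exact hv.2 hw.1

lemma adj_iff_of_induce_eq {G G' : SimpleGraph V} {A : Set V}
    (h : G.induce A = G'.induce A) {u v : V} (hu : u ∈ A) (hv : v ∈ A) :
    (G.Adj u v ↔ G'.Adj u v) := by
  have h2 := congrFun (congrFun (congrArg SimpleGraph.Adj h) ⟨u, hu⟩) ⟨v, hv⟩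
  simpa using iff_of_eq h2

lemma induce_eq_induce {G G' : SimpleGraph V} {A : Set V}
    (h : ∀ u v, u ∈ A → v ∈ A → (G.Adj u v ↔ G'.Adj u v)) :
    G.induce A = G'.induce A := by
  ext ⟨u, hu⟩ ⟨v, hv⟩
  simpa using h u v hu hv

lemma eq_of_marginals {G G' : SimpleGraph V} {A B : Set V} (hAB : A ∪ B = Set.univ)
    (hG : ∀ u ∈ A \ B, ∀ v ∈ B \ A, ¬ G.Adj u v)
    (hG' : ∀ u ∈ A \ B, ∀ v ∈ B \ A, ¬ G'.Adj u v)
    (hA : G.induce A = G'.induce A) (hB : G.induce B = G'.induce B) : G = G' := by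
  have hmem : ∀ x : V, x ∈ A ∨ x ∈ B := by
    intro x
    have : x ∈ A ∪ B := by rw [hAB]; exact Set.mem_univ x
    exact this
  ext u v
  rcases hmem u with hu | hu <;> rcases hmem v with hv | hv
  · exact adj_iff_of_induce_eq hA hu hv
  · by_cases hv' : v ∈ A
    · exact adj_iff_of_induce_eq hA hu hv'
    · by_cases hu' : u ∈ B
      · exact adj_iff_of_induce_eq hB hu' hv
      · exact iff_of_false (hG u ⟨hu, hu'⟩ v ⟨hv, hv'⟩) (hG' u ⟨hu, hu'⟩ v ⟨hv, hv'⟩)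
  · by_cases hu' : u ∈ A
    · exact adj_iff_of_induce_eq hA hu' hv
    · by_cases hv' : v ∈ B
      · exact adj_iff_of_induce_eq hB hu hv'
      · exact iff_of_false (fun hadj => hG v ⟨hv, hv'⟩ u ⟨hu, hu'⟩ hadj.symm)
          (fun hadj => hG' v ⟨hv, hv'⟩ u ⟨hu, hu'⟩ hadj.symm)
  · exact adj_iff_of_induce_eq hB hu hv

lemma finite_graphs [Finite V] : Finite (SimpleGraph V) :=
  Finite.of_injective (fun G => G.Adj) fun _ _ h => SimpleGraph.ext h

lemma mass_pos [Fintype V] (π : SimpleGraph V → ℝ) (h0 : ∀ G, 0 ≤ π G)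
    (s : Set (SimpleGraph V)) (G₀ : SimpleGraph V) (hmem : G₀ ∈ s) (hpos : 0 < π G₀) :
    0 < mass π s := by
  haveI : Finite (SimpleGraph V) := finite_graphs
  have hf : (s ∩ Function.support π).Finite := Set.toFinite _
  have : mass π s = ∑ G ∈ hf.toFinset, π G := finsum_mem_eq_sum π hf
  rw [this]
  exact Finset.sum_pos' (fun i _ => h0 i)
    ⟨G₀, hf.mem_toFinset.mpr ⟨hmem, hpos.ne'⟩, hpos⟩

lemma mass_singleton [Fintype V] (π : SimpleGraph V → ℝ) (G : SimpleGraph V) :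
    mass π ({G} : Set (SimpleGraph V)) = π G := finsum_mem_singleton

/-- The key consequence of the weak structural Markov property. -/
lemma key_mul [Fintype V] (π : SimpleGraph V → ℝ)
    (hlaw : IsGraphLaw π) (hsupp : FullSupport π) (hwsm : WeaklyStructurallyMarkov π)
    {S R₁ R₂ : Set V} (h12 : R₁ ∩ R₂ = S) {b : V} (hb : b ∈ R₂) (hbS : b ∉ S) :
    π (coverGraph {R₁, R₂}) * π (coverGraph {S ∪ {b}}) =
      π (coverGraph {R₁, S ∪ {b}}) * π (coverGraph {R₂}) := by
  classical
  set T : Set V := S ∪ {b} with hTdef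
  set A : Set V := R₂ᶜ ∪ T with hAdef
  set B : Set V := R₂ with hBdef
  have hSR₂ : S ⊆ R₂ := by rw [← h12]; exact Set.inter_subset_right
  have hSR₁ : S ⊆ R₁ := by rw [← h12]; exact Set.inter_subset_left
  have hbR₁ : b ∉ R₁ := by
    intro hbR
    have : b ∈ R₁ ∩ R₂ := ⟨hbR, hb⟩
    rw [h12] at this
    exact hbS this
  have hTB : T ⊆ B := Set.union_subset hSR₂ (Set.singleton_subset_iff.mpr hb)
  have hbT : b ∈ T := Set.mem_union_right _ rfl
  have hAB : A ∪ B = Set.univ := by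
    ext x
    simp only [hAdef, hBdef, Set.mem_union, Set.mem_compl_iff, Set.mem_univ, iff_true]
    tauto
  have hABT : A ∩ B = T := by
    ext x
    simp only [hAdef, hBdef, Set.mem_inter_iff, Set.mem_union, Set.mem_compl_iff]
    constructor
    · rintro ⟨h1 | h1, h2⟩
      · exact absurd h2 h1
      · exact h1
    · intro hx
      exact ⟨Or.inr hx, hTB hx⟩
  have hR₁A : R₁ ⊆ A := by
    intro x hx
    by_cases hx2 : x ∈ R₂
    · refine Set.mem_union_right _ (Set.mem_union_left _ ?_)
      rw [← h12]; exact ⟨hx, hx2⟩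
    · exact Set.mem_union_left _ hx2
  have hTA : T ⊆ A := Set.subset_union_right
  have hR₂AT : ∀ x ∈ R₂, x ∈ A → x ∈ T := by
    intro x hx2 hxA
    rcases hxA with h | h
    · exact absurd hx2 h
    · exact h
  set X := coverGraph ({R₁, R₂} : Set (Set V)) with hXdef
  set Y := coverGraph ({R₁, T} : Set (Set V)) with hYdef
  set Z := coverGraph ({R₂} : Set (Set V)) with hZdef
  set W := coverGraph ({T} : Set (Set V)) with hWdef
  have hclX : X.IsClique T := cover_clique (Set.mem_insert_of_mem _ rfl) hTB
  have hclY : Y.IsClique T := cover_clique (Set.mem_insert_of_mem _ rfl) subset_rfl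
  have hclZ : Z.IsClique T := cover_clique rfl hTB
  have hclW : W.IsClique T := cover_clique rfl subset_rfl
  have hmaxX : MaxCliqueIn X A T := by
    refine cover_max hTA hclX hbT ?_
    rintro C (h | h) hbC
    · exact absurd (h ▸ hbC) hbR₁
    · intro x hx hxA; exact hR₂AT x (h ▸ hx) hxA
  have hmaxY : MaxCliqueIn Y A T := by
    refine cover_max hTA hclY hbT ?_
    rintro C (h | h) hbC
    · exact absurd (h ▸ hbC) hbR₁
    · intro x hx _; exact h ▸ hx
  have hmaxZ : MaxCliqueIn Z A T := by
    refine cover_max hTA hclZ hbT ?_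
    rintro C h hbC
    rw [Set.mem_singleton_iff] at h
    intro x hx hxA; exact hR₂AT x (h ▸ hx) hxA
  have hmaxW : MaxCliqueIn W A T := by
    refine cover_max hTA hclW hbT ?_
    rintro C h hbC
    rw [Set.mem_singleton_iff] at h
    intro x hx _; exact h ▸ hx
  have hXU : X ∈ Ustar A B := by
    refine ⟨chordal_pair _ _,
      cover_decomp hAB (by rw [hABT]; exact hclX) ?_, by rw [hABT]; exact hmaxX⟩
    rintro C (h | h)
    · exact Or.inl (by rw [h]; exact hR₁A)
    · exact Or.inr (by rw [h])
  have hYU : Y ∈ Ustar A B := by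
    refine ⟨chordal_pair _ _,
      cover_decomp hAB (by rw [hABT]; exact hclY) ?_, by rw [hABT]; exact hmaxY⟩
    rintro C (h | h)
    · exact Or.inl (by rw [h]; exact hR₁A)
    · exact Or.inr (by rw [h]; exact hTB)
  have hZU : Z ∈ Ustar A B := by
    refine ⟨chordal_single _,
      cover_decomp hAB (by rw [hABT]; exact hclZ) ?_, by rw [hABT]; exact hmaxZ⟩
    rintro C h
    rw [Set.mem_singleton_iff] at h
    exact Or.inr (by rw [h])
  have hWU : W ∈ Ustar A B := by
    refine ⟨chordal_single _,
      cover_decomp hAB (by rw [hABT]; exact hclW) ?_, by rw [hABT]; exact hmaxW⟩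
    rintro C h
    rw [Set.mem_singleton_iff] at h
    exact Or.inr (by rw [h]; exact hTB)
  have hAXY : X.induce A = Y.induce A := by
    refine induce_eq_induce fun u v hu hv => ?_
    constructor
    · rintro ⟨hne, C, (h | h), hu', hv'⟩
      · exact ⟨hne, C, by rw [h]; exact Set.mem_insert _ _, hu', hv'⟩
      · exact ⟨hne, T, Set.mem_insert_of_mem _ rfl, hR₂AT u (h ▸ hu') hu, hR₂AT v (h ▸ hv') hv⟩
    · rintro ⟨hne, C, (h | h), hu', hv'⟩
      · exact ⟨hne, C, by rw [h]; exact Set.mem_insert _ _, hu', hv'⟩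
      · exact ⟨hne, R₂, Set.mem_insert_of_mem _ rfl, hTB (h ▸ hu'), hTB (h ▸ hv')⟩
  have hAZW : Z.induce A = W.induce A := by
    refine induce_eq_induce fun u v hu hv => ?_
    constructor
    · rintro ⟨hne, C, h, hu', hv'⟩
      rw [Set.mem_singleton_iff] at h
      exact ⟨hne, T, rfl, hR₂AT u (h ▸ hu') hu, hR₂AT v (h ▸ hv') hv⟩
    · rintro ⟨hne, C, h, hu', hv'⟩
      rw [Set.mem_singleton_iff] at h
      exact ⟨hne, R₂, rfl, hTB (h ▸ hu'), hTB (h ▸ hv')⟩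
  have hBXZ : X.induce B = Z.induce B := by
    refine induce_eq_induce fun u v hu hv => ?_
    constructor
    · rintro ⟨hne, C, (h | h), hu', hv'⟩
      · exact ⟨hne, R₂, rfl, hu, hv⟩
      · exact ⟨hne, R₂, rfl, h ▸ hu', h ▸ hv'⟩
    · rintro ⟨hne, C, h, hu', hv'⟩
      rw [Set.mem_singleton_iff] at h
      exact ⟨hne, R₂, Set.mem_insert_of_mem _ rfl, h ▸ hu', h ▸ hv'⟩
  have hBYW : Y.induce B = W.induce B := by
    refine induce_eq_induce fun u v hu hv => ?_
    constructor
    · rintro ⟨hne, C, (h | h), hu', hv'⟩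
      · refine ⟨hne, T, rfl, Set.mem_union_left _ ?_, Set.mem_union_left _ ?_⟩
        · rw [← h12]; exact ⟨h ▸ hu', hu⟩
        · rw [← h12]; exact ⟨h ▸ hv', hv⟩
      · exact ⟨hne, T, rfl, h ▸ hu', h ▸ hv'⟩
    · rintro ⟨hne, C, h, hu', hv'⟩
      rw [Set.mem_singleton_iff] at h
      exact ⟨hne, T, Set.mem_insert_of_mem _ rfl, h ▸ hu', h ▸ hv'⟩
  have uniq : ∀ (H₁ H₂ C : SimpleGraph V), C ∈ Ustar A B →
      C.induce A = H₁.induce A → C.induce B = H₂.induce B →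
      {G ∈ Ustar A B | G.induce A = H₁.induce A ∧ G.induce B = H₂.induce B} = {C} := by
    intro H₁ H₂ C hC h1 h2
    apply Set.eq_singleton_iff_unique_mem.mpr
    refine ⟨⟨hC, h1, h2⟩, ?_⟩
    rintro G ⟨hGU, hGA, hGB⟩
    exact eq_of_marginals hAB
      (fun u hu v hv => decomp_no_adj hGU.2.1 hu hv)
      (fun u hu v hv => decomp_no_adj hC.2.1 hu hv)
      (hGA.trans h1.symm) (hGB.trans h2.symm)
  have E11 := hwsm A B hAB X hXU X hXU
  rw [uniq X X X hXU rfl rfl, mass_singleton] at E11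
  have E10 := hwsm A B hAB X hXU Y hYU
  rw [uniq X Y Y hYU hAXY.symm rfl, mass_singleton] at E10
  have E01 := hwsm A B hAB Z hZU X hXU
  rw [uniq Z X Z hZU rfl hBXZ.symm, mass_singleton] at E01
  have E00 := hwsm A B hAB Z hZU Y hYU
  rw [uniq Z Y W hWU hAZW.symm hBYW.symm, mass_singleton] at E00
  have hM : 0 < mass π (Ustar A B) :=
    mass_pos π hlaw.1 _ X hXU (hsupp X (chordal_pair _ _))
  set M := mass π (Ustar A B) with hMdef
  set a1 := mass π {G ∈ Ustar A B | G.induce A = X.induce A} with ha1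
  set a0 := mass π {G ∈ Ustar A B | G.induce A = Z.induce A} with ha0
  set b1 := mass π {G ∈ Ustar A B | G.induce B = X.induce B} with hb1
  set b0 := mass π {G ∈ Ustar A B | G.induce B = Y.induce B} with hb0
  have hmain : (π X * π W) * (M * M) = (π Y * π Z) * (M * M) := by
    calc (π X * π W) * (M * M) = (π X * M) * (π W * M) := by ring
    _ = (a1 * b1) * (a0 * b0) := by rw [E11, E00]
    _ = (a1 * b0) * (a0 * b1) := by ring
    _ = (π Y * M) * (π Z * M) := by rw [E10, E01]
    _ = (π Y * π Z) * (M * M) := by ring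
  exact mul_right_cancel₀ (mul_ne_zero hM.ne' hM.ne') hmain

/-- The ratio in question. -/
noncomputable def rr (π : SimpleGraph V → ℝ) (X Y : Set V) : ℝ :=
  π (coverGraph {X, Y}) / (π (coverGraph {X}) * π (coverGraph {Y}))

lemma rr_symm (π : SimpleGraph V → ℝ) (X Y : Set V) : rr π X Y = rr π Y X := by
  unfold rr
  rw [Set.pair_comm X Y, mul_comm]

lemma rr_key [Fintype V] (π : SimpleGraph V → ℝ)
    (hlaw : IsGraphLaw π) (hsupp : FullSupport π) (hwsm : WeaklyStructurallyMarkov π)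
    {S R₁ R₂ : Set V} (h12 : R₁ ∩ R₂ = S) {b : V} (hb : b ∈ R₂) (hbS : b ∉ S) :
    rr π R₁ R₂ = rr π R₁ (S ∪ {b}) := by
  have key := key_mul π hlaw hsupp hwsm h12 hb hbS
  have p1 : 0 < π (coverGraph {R₁}) := hsupp _ (chordal_single _)
  have p2 : 0 < π (coverGraph {R₂}) := hsupp _ (chordal_single _)
  have pT : 0 < π (coverGraph {S ∪ {b}}) := hsupp _ (chordal_single _)
  unfold rr
  rw [div_eq_div_iff (by positivity) (by positivity)]
  linear_combination π (coverGraph ({R₁} : Set (Set V))) * key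

lemma rr_move [Fintype V] (π : SimpleGraph V → ℝ)
    (hlaw : IsGraphLaw π) (hsupp : FullSupport π) (hwsm : WeaklyStructurallyMarkov π)
    {S : Set V} {x y z : V} (hy : y ∉ S) (hz : z ∉ S)
    (hxy : x ≠ y) (hxz : x ≠ z) :
    rr π (S ∪ {x}) (S ∪ {y}) = rr π (S ∪ {x}) (S ∪ {z}) := by
  by_cases hyz : y = z
  · rw [hyz]
  · have hint : (S ∪ {x}) ∩ (S ∪ {y, z}) = S := by
      ext a
      simp only [Set.mem_inter_iff, Set.mem_union, Set.mem_singleton_iff, Set.mem_insert_iff]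
      constructor
      · rintro ⟨h1 | rfl, h2⟩
        · exact h1
        · rcases h2 with h2 | rfl | rfl
          · exact h2
          · exact absurd rfl hxy
          · exact absurd rfl hxz
      · intro ha
        exact ⟨Or.inl ha, Or.inl ha⟩
    have k1 := rr_key π hlaw hsupp hwsm hint
      (b := y) (Set.mem_union_right _ (Set.mem_insert _ _)) hy
    have k2 := rr_key π hlaw hsupp hwsm hint
      (b := z) (Set.mem_union_right _ (Set.mem_insert_of_mem _ rfl)) hz
    exact k1.symm.trans k2

lemma rr_pairs [Fintype V] (π : SimpleGraph V → ℝ)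
    (hlaw : IsGraphLaw π) (hsupp : FullSupport π) (hwsm : WeaklyStructurallyMarkov π)
    {S : Set V} {x y x' y' : V} (hx : x ∉ S) (hy : y ∉ S) (hx' : x' ∉ S) (hy' : y' ∉ S)
    (hxy : x ≠ y) (hxy' : x' ≠ y') :
    rr π (S ∪ {x}) (S ∪ {y}) = rr π (S ∪ {x'}) (S ∪ {y'}) := by
  by_cases h1 : x = y'
  · subst h1
    by_cases h2 : y = x'
    · subst h2
      exact rr_symm π _ _
    · calc rr π (S ∪ {x}) (S ∪ {y})
          = rr π (S ∪ {x}) (S ∪ {x'}) :=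
            rr_move π hlaw hsupp hwsm hy hx' hxy (Ne.symm hxy')
      _ = rr π (S ∪ {x'}) (S ∪ {x}) := rr_symm π _ _
  · calc rr π (S ∪ {x}) (S ∪ {y})
        = rr π (S ∪ {x}) (S ∪ {y'}) := rr_move π hlaw hsupp hwsm hy hy' hxy h1
    _ = rr π (S ∪ {y'}) (S ∪ {x}) := rr_symm π _ _
    _ = rr π (S ∪ {y'}) (S ∪ {x'}) :=
        rr_move π hlaw hsupp hwsm hx hx' (Ne.symm h1) (Ne.symm hxy')
    _ = rr π (S ∪ {x'}) (S ∪ {y'}) := rr_symm π _ _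

end Aux

/-- for a weakly structurally Markov law with full support and
`|S| ≤ |V| − 2`, the ratio `π(G⟨R₁,R₂⟩)/(π(G⟨R₁⟩)π(G⟨R₂⟩))` depends only on
`S = R₁ ∩ R₂`. -/
theorem wsm_ratio_depends_only_on_S {V : Type*} [Fintype V] (π : SimpleGraph V → ℝ)
    (hlaw : IsGraphLaw π) (hsupp : FullSupport π) (hwsm : WeaklyStructurallyMarkov π)
    (S : Set V) (hS : S.ncard ≤ Fintype.card V - 2)
    (R₁ R₂ R₁' R₂' : Set V)
    (h12 : R₁ ∩ R₂ = S) (h1 : S ⊂ R₁) (h2 : S ⊂ R₂)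
    (h12' : R₁' ∩ R₂' = S) (h1' : S ⊂ R₁') (h2' : S ⊂ R₂') :
    π (coverGraph {R₁, R₂}) / (π (coverGraph {R₁}) * π (coverGraph {R₂})) =
      π (coverGraph {R₁', R₂'}) / (π (coverGraph {R₁'}) * π (coverGraph {R₂'})) := by

  obtain ⟨a, haR, haS⟩ := Set.exists_of_ssubset h1
  obtain ⟨b, hbR, hbS⟩ := Set.exists_of_ssubset h2
  obtain ⟨a', haR', haS'⟩ := Set.exists_of_ssubset h1'
  obtain ⟨b', hbR', hbS'⟩ := Set.exists_of_ssubset h2'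
  have hSR₁ : S ⊆ R₁ := h1.subset
  have hSR₁' : S ⊆ R₁' := h1'.subset
  have hbR₁ : b ∉ R₁ := by
    intro h
    have : b ∈ R₁ ∩ R₂ := ⟨h, hbR⟩
    rw [h12] at this
    exact hbS this
  have hbR₁' : b' ∉ R₁' := by
    intro h
    have : b' ∈ R₁' ∩ R₂' := ⟨h, hbR'⟩
    rw [h12'] at this
    exact hbS' this
  have hab : a ≠ b := fun h => hbR₁ (h ▸ haR)
  have hab' : a' ≠ b' := fun h => hbR₁' (h ▸ haR')
  have hint : (S ∪ {b}) ∩ R₁ = S := by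
    ext t
    constructor
    · rintro ⟨h1t | rfl, h2t⟩
      · exact h1t
      · exact absurd h2t hbR₁
    · intro ht
      exact ⟨Or.inl ht, hSR₁ ht⟩
  have hint' : (S ∪ {b'}) ∩ R₁' = S := by
    ext t
    constructor
    · rintro ⟨h1t | rfl, h2t⟩
      · exact h1t
      · exact absurd h2t hbR₁'
    · intro ht
      exact ⟨Or.inl ht, hSR₁' ht⟩
  have c1 : rr π R₁ R₂ = rr π (S ∪ {b}) (S ∪ {a}) := by
    calc rr π R₁ R₂ = rr π R₁ (S ∪ {b}) := rr_key π hlaw hsupp hwsm h12 hbR hbS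
    _ = rr π (S ∪ {b}) R₁ := rr_symm π _ _
    _ = rr π (S ∪ {b}) (S ∪ {a}) := rr_key π hlaw hsupp hwsm hint haR haS
  have c1' : rr π R₁' R₂' = rr π (S ∪ {b'}) (S ∪ {a'}) := by
    calc rr π R₁' R₂' = rr π R₁' (S ∪ {b'}) := rr_key π hlaw hsupp hwsm h12' hbR' hbS'
    _ = rr π (S ∪ {b'}) R₁' := rr_symm π _ _
    _ = rr π (S ∪ {b'}) (S ∪ {a'}) := rr_key π hlaw hsupp hwsm hint' haR' haS'
  have c2 : rr π (S ∪ {b}) (S ∪ {a}) = rr π (S ∪ {b'}) (S ∪ {a'}) :=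
    rr_pairs π hlaw hsupp hwsm hbS haS hbS' haS' (Ne.symm hab) (Ne.symm hab')
  show rr π R₁ R₂ = rr π R₁' R₂'
  exact c1.trans (c2.trans c1'.symm)
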